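/- Let d ≥ 1 and let 𝕋^d = (ℝ/ℤ)^d be the d-dimensional torus with the quotient metric ρ(x,y) = max_{1≤i≤d} min_{k∈ℤ} |x̃_i − ỹ_i − k|. Every bijective isometry g : 𝕋^d → 𝕋^d is affine of the following form: there exist a signed permutation matrix M ∈ ℤ^{d×d} and a vector b ∈ ℝ^d such that g is induced by the map x ↦ M x + b of ℝ^d; equivalently, g is a finite composition of translations x ↦ x + v, coordinate sign flips x_i ↦ −x_i, and coordinate exchanges x_i ↔ x_j. -/

import Mathlib

/-- The `d`-dimensional torus `(ℝ/ℤ)^d`, with the sup-product of the quotient metrics. -/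
abbrev Torus (d : ℕ) := Fin d → AddCircle (1 : ℝ)

/-- The quotient map `ℝ^d → 𝕋^d`. -/
noncomputable def quotMap (d : ℕ) (x : Fin d → ℝ) : Torus d :=
  fun i => (x i : AddCircle (1 : ℝ))

/-- A signed permutation matrix: each row and each column has exactly one nonzero
entry, and that entry is `±1`. -/
def IsSignedPermMatrix {d : ℕ} (M : Matrix (Fin d) (Fin d) ℤ) : Prop :=
  (∀ i, ∃! j, M i j ≠ 0) ∧ (∀ j, ∃! i, M i j ≠ 0) ∧
    ∀ i j, M i j = 0 ∨ M i j = 1 ∨ M i j = -1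

noncomputable section
open AddCircle

instance fact01 : Fact ((0:ℝ) < 1) := ⟨one_pos⟩

/-- representative in [-1/2, 1/2) -/
noncomputable def rep (z : AddCircle (1:ℝ)) : ℝ := (equivIco 1 (-(1/2)) z : ℝ)

lemma rep_mem (z : AddCircle (1:ℝ)) : rep z ∈ Set.Ico (-(1/2) : ℝ) (1/2) := by
  have := (equivIco (1:ℝ) (-(1/2)) z).2
  norm_num at this ⊢
  exact this

lemma quot_rep (z : AddCircle (1:ℝ)) : ((rep z : ℝ) : AddCircle (1:ℝ)) = z :=
  (equivIco (1:ℝ) (-(1/2))).symm_apply_apply z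

lemma coe_eq_zero_iff_int (v : ℝ) : ((v : ℝ) : AddCircle (1:ℝ)) = 0 ↔ ∃ k : ℤ, v = k := by
  rw [AddCircle.coe_eq_zero_iff]
  constructor
  · rintro ⟨n, rfl⟩; exact ⟨n, by simp⟩
  · rintro ⟨k, rfl⟩; exact ⟨k, by simp⟩

lemma norm_coe_le (t : ℝ) : ‖((t:ℝ) : AddCircle (1:ℝ))‖ ≤ |t| := by
  rw [AddCircle.norm_eq]
  simpa using round_le t 0

lemma norm_coe_eq (t : ℝ) (ht : |t| ≤ 1/2) : ‖((t:ℝ) : AddCircle (1:ℝ))‖ = |t| := by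
  rw [AddCircle.norm_coe_eq_abs_iff] <;> norm_num [ht]

lemma abs_rep_eq_norm (z : AddCircle (1:ℝ)) : |rep z| = ‖z‖ := by
  conv_rhs => rw [← quot_rep z]
  rw [AddCircle.norm_eq]
  have h := rep_mem z
  have h0 : round ((1:ℝ)⁻¹ * rep z) = 0 := by
    rw [round_eq_zero_iff]
    simp only [Set.mem_Ico] at h ⊢
    constructor <;> [nlinarith [h.1]; nlinarith [h.2]]
  rw [h0]
  norm_num

lemma rep_coe (v : ℝ) (hv : v ∈ Set.Ico (-(1/2):ℝ) (1/2)) : rep ((v:ℝ) : AddCircle (1:ℝ)) = v := by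
  have : ((rep ((v:ℝ) : AddCircle (1:ℝ)) : ℝ) : AddCircle (1:ℝ)) = ((v:ℝ) : AddCircle (1:ℝ)) :=
    quot_rep _
  have h2 := rep_mem ((v:ℝ) : AddCircle (1:ℝ))
  rw [AddCircle.coe_eq_coe_iff_of_mem_Ico (a := -(1/2)) (by norm_num [h2]) (by norm_num [hv])] at this
  exact this

lemma continuousAt_rep (z : AddCircle (1:ℝ)) (hz : ‖z‖ < 1/2) : ContinuousAt rep z := by
  have hne : z ≠ ((-(1/2) : ℝ) : AddCircle (1:ℝ)) := by
    intro h
    rw [h, norm_coe_eq _ (by rw [abs_neg, abs_of_pos] <;> norm_num), abs_neg,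
      abs_of_pos (by norm_num : (0:ℝ) < 1/2)] at hz
    linarith
  exact continuousAt_subtype_val.comp (AddCircle.continuousAt_equivIco 1 (-(1/2)) hne)

variable {d : ℕ}

lemma quotMap_add (x y : Fin d → ℝ) : quotMap d (x + y) = quotMap d x + quotMap d y := by
  funext i; simp [quotMap]

lemma quotMap_sub (x y : Fin d → ℝ) : quotMap d (x - y) = quotMap d x - quotMap d y := by
  funext i; simp [quotMap]

lemma quotMap_continuous : Continuous (quotMap d) :=
  continuous_pi fun i => Continuous.comp continuous_quotient_mk' (continuous_apply i)

/-- vector of representatives -/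
noncomputable def repV (z : Torus d) : Fin d → ℝ := fun i => rep (z i)

lemma quotMap_repV (z : Torus d) : quotMap d (repV z) = z := by
  funext i; exact quot_rep (z i)

lemma norm_repV (z : Torus d) : ‖repV z‖ = ‖z‖ := by
  simp only [Pi.norm_def]
  congr 1
  apply Finset.sup_congr rfl
  intro i _
  ext
  simpa [repV, coe_nnnorm, Real.norm_eq_abs] using abs_rep_eq_norm (z i)

lemma norm_quotMap_le (x : Fin d → ℝ) : ‖quotMap d x‖ ≤ ‖x‖ := by
  rcases Nat.eq_zero_or_pos d with rfl | hd
  · simp [Pi.norm_def]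
  have : (0:ℝ) ≤ ‖x‖ := norm_nonneg x
  rw [pi_norm_le_iff_of_nonneg this]
  intro i
  exact (norm_coe_le (x i)).trans ((Real.norm_eq_abs (x i)) ▸ norm_le_pi_norm x i)

lemma norm_quotMap_eq (x : Fin d → ℝ) (hx : ‖x‖ ≤ 1/2) : ‖quotMap d x‖ = ‖x‖ := by
  simp only [Pi.norm_def]
  congr 1
  apply Finset.sup_congr rfl
  intro i _
  ext
  have hxi : |x i| ≤ 1/2 := by
    calc |x i| = ‖x i‖ := (Real.norm_eq_abs _).symm
    _ ≤ ‖x‖ := norm_le_pi_norm x i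
    _ ≤ 1/2 := hx
  simpa [quotMap, coe_nnnorm, Real.norm_eq_abs] using norm_coe_eq (x i) hxi

lemma quotMap_eq_zero_of_small (v : Fin d → ℝ) (hv : quotMap d v = 0) (h : ‖v‖ < 1) : v = 0 := by
  funext i
  have hvi : ((v i : ℝ) : AddCircle (1:ℝ)) = 0 := congrFun hv i
  obtain ⟨k, hk⟩ := (coe_eq_zero_iff_int (v i)).mp hvi
  have : |v i| < 1 := lt_of_le_of_lt ((Real.norm_eq_abs (v i)) ▸ norm_le_pi_norm v i) h
  rw [hk] at this
  have : k = 0 := by exact_mod_cast (by rwa [← Int.cast_abs, ← Int.cast_one, Int.cast_lt] at this : |k| < 1) |> fun h => Int.abs_lt_one_iff.mp h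
  simp [hk, this]

lemma repV_quotMap_small (v : Fin d → ℝ) (hv : ‖v‖ < 1/2) : repV (quotMap d v) = v := by
  have h1 : quotMap d (repV (quotMap d v) - v) = 0 := by
    rw [quotMap_sub, quotMap_repV, sub_self]
  have h2 : ‖repV (quotMap d v) - v‖ < 1 := by
    calc ‖repV (quotMap d v) - v‖ ≤ ‖repV (quotMap d v)‖ + ‖v‖ := norm_sub_le _ _
    _ = ‖quotMap d v‖ + ‖v‖ := by rw [norm_repV]
    _ ≤ ‖v‖ + ‖v‖ := by linarith [norm_quotMap_le v]
    _ < 1 := by linarith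
  have := quotMap_eq_zero_of_small _ h1 h2
  funext i
  have := congrFun this i
  simp only [Pi.sub_apply, Pi.zero_apply, sub_eq_zero] at this
  exact this

lemma continuousAt_repV (z : Torus d) (hz : ‖z‖ < 1/2) : ContinuousAt repV z := by
  apply continuousAt_pi.mpr
  intro i
  exact ContinuousAt.comp (continuousAt_rep (z i) (lt_of_le_of_lt (norm_le_pi_norm z i) hz))
    (continuous_apply i).continuousAt



lemma repV_zero {d : ℕ} : repV (0 : Torus d) = 0 := by
  funext i
  show rep ((0:Torus d) i) = 0
  have : ((0:Torus d) i) = (((0:ℝ)) : AddCircle (1:ℝ)) := by simp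
  rw [this, rep_coe 0 (by norm_num)]

----------------- Section C: chain lifting -----------------

variable {d : ℕ}

/-- integer-vector-valued continuous path starting at 0 is constantly 0 -/
lemma intvec (H : ℝ → (Fin d → ℝ)) (hc : ContinuousOn H (Set.Icc 0 1))
    (hint : ∀ t ∈ Set.Icc (0:ℝ) 1, quotMap d (H t) = 0) (h0 : H 0 = 0) : H 1 = 0 := by
  funext i
  have hci : ContinuousOn (fun t => H t i) (Set.Icc 0 1) :=
    (continuous_apply i).comp_continuousOn hc
  have hinti : ∀ t ∈ Set.Icc (0:ℝ) 1, ∃ k : ℤ, H t i = k := by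
    intro t ht
    exact (coe_eq_zero_iff_int (H t i)).mp (congrFun (hint t ht) i)
  have h0i : H 0 i = 0 := by rw [h0]; rfl
  show H 1 i = 0
  by_contra hne
  obtain ⟨k, hk⟩ := hinti 1 (by norm_num)
  have hk0 : k ≠ 0 := by
    intro h; rw [h] at hk; exact hne (by simpa using hk)
  have key : ∀ c : ℝ, c ∈ Set.Icc (min (H 0 i) (H 1 i)) (max (H 0 i) (H 1 i)) →
      ∃ t ∈ Set.Icc (0:ℝ) 1, H t i = c := by
    intro c hcmem
    have := intermediate_value_uIcc (a := (0:ℝ)) (b := 1) (f := fun t => H t i)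
      (by rwa [Set.uIcc_of_le (by norm_num : (0:ℝ) ≤ 1)])
    obtain ⟨t, ht, h⟩ := this hcmem
    exact ⟨t, by rwa [Set.uIcc_of_le (by norm_num : (0:ℝ) ≤ 1)] at ht, h⟩
  rcases lt_or_gt_of_ne hk0 with hneg | hpos
  · have hk1 : (k:ℝ) ≤ -1 := by exact_mod_cast (by omega : k ≤ -1)
    obtain ⟨t, ht, hc⟩ := key (-(1/2)) (by
      rw [h0i, hk]
      exact ⟨min_le_iff.mpr (Or.inr (by linarith)), le_max_iff.mpr (Or.inl (by norm_num))⟩)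
    obtain ⟨m, hm⟩ := hinti t ht
    rw [hm] at hc
    have : (2*m : ℝ) = -1 := by push_cast; linarith
    have : (2*m : ℤ) = -1 := by exact_mod_cast this
    omega
  · have hk1 : (1:ℝ) ≤ (k:ℝ) := by exact_mod_cast (by omega : 1 ≤ k)
    obtain ⟨t, ht, hc⟩ := key (1/2) (by
      rw [h0i, hk]
      exact ⟨min_le_iff.mpr (Or.inl (by norm_num)), le_max_iff.mpr (Or.inr (by linarith))⟩)
    obtain ⟨m, hm⟩ := hinti t ht
    rw [hm] at hc
    have : (2*m : ℝ) = 1 := by push_cast; linarith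
    have : (2*m : ℤ) = 1 := by exact_mod_cast this
    omega


/-- quotMap of a finite sum -/
lemma quotMap_sum {s : Finset ℕ} (f : ℕ → (Fin d → ℝ)) :
    quotMap d (∑ k ∈ s, f k) = ∑ k ∈ s, quotMap d (f k) := by
  funext i
  rw [Finset.sum_apply]
  show ((∑ k ∈ s, f k) i : AddCircle (1:ℝ)) = _
  rw [Finset.sum_apply]
  exact map_sum (QuotientAddGroup.mk' (AddSubgroup.zmultiples (1:ℝ))) (fun k => f k i) s

/-- the chain sum along the straight segment from `0` to `x`, in `N` steps -/
noncomputable def chain (φ : (Fin d → ℝ) → Torus d) (x : Fin d → ℝ) (N : ℕ) : Fin d → ℝ :=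
  ∑ k ∈ Finset.range N, repV (φ ((((k:ℝ)+1)/N) • x) - φ (((k:ℝ)/N) • x))

lemma quot_chain (φ : (Fin d → ℝ) → Torus d) (x : Fin d → ℝ) (N : ℕ) (hN : N ≠ 0) :
    quotMap d (chain φ x N) = φ x - φ 0 := by
  rw [chain, quotMap_sum]
  have : ∀ k ∈ Finset.range N,
      quotMap d (repV (φ ((((k:ℝ)+1)/N) • x) - φ (((k:ℝ)/N) • x)))
        = φ (((((k+1):ℕ):ℝ)/N) • x) - φ ((((k:ℕ):ℝ)/N) • x) := by
    intro k _
    rw [quotMap_repV]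
    push_cast
    ring_nf
  rw [Finset.sum_congr rfl this, Finset.sum_range_sub (fun k => φ ((((k:ℕ):ℝ)/N) • x))]
  have h1 : (((N:ℕ):ℝ)/N) • x = x := by
    rw [div_self (by exact_mod_cast hN), one_smul]
  have h0 : (((0:ℕ):ℝ)/N) • x = 0 := by norm_num
  rw [h1, h0]

section Chain

variable (φ : (Fin d → ℝ) → Torus d)

lemma step_small (hφl : ∀ u v : Fin d → ℝ, ‖φ u - φ v‖ ≤ ‖u - v‖)
    {N : ℕ} (hN : N ≠ 0) {y : Fin d → ℝ} (hy : ‖y‖ ≤ (N:ℝ)/4) (k : ℕ) :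
    ‖φ ((((k:ℝ)+1)/N) • y) - φ (((k:ℝ)/N) • y)‖ ≤ 1/4 := by
  have hNpos : (0:ℝ) < N := by exact_mod_cast Nat.pos_of_ne_zero hN
  calc ‖φ ((((k:ℝ)+1)/N) • y) - φ (((k:ℝ)/N) • y)‖
      ≤ ‖(((k:ℝ)+1)/N) • y - ((k:ℝ)/N) • y‖ := hφl _ _
    _ = ‖(1/(N:ℝ)) • y‖ := by rw [← sub_smul]; congr 1; congr 1; ring
    _ = ‖y‖/N := by rw [norm_smul]; simp [abs_of_pos, hNpos]; ring
    _ ≤ 1/4 := by rw [div_le_iff₀ hNpos]; linarith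

lemma chain_cont (hφc : Continuous φ) (hφl : ∀ u v : Fin d → ℝ, ‖φ u - φ v‖ ≤ ‖u - v‖)
    {N : ℕ} (hN : N ≠ 0) (c : ℝ → (Fin d → ℝ)) (hc : Continuous c)
    (hB : ∀ t ∈ Set.Icc (0:ℝ) 1, ‖c t‖ ≤ (N:ℝ)/4) :
    ContinuousOn (fun t => chain φ (c t) N) (Set.Icc (0:ℝ) 1) := by
  apply continuousOn_finset_sum
  intro k _
  intro t ht
  apply ContinuousAt.continuousWithinAt
  have hz : ‖φ ((((k:ℝ)+1)/N) • c t) - φ (((k:ℝ)/N) • c t)‖ < 1/2 :=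
    lt_of_le_of_lt (step_small φ hφl hN (hB t ht) k) (by norm_num)
  have hcont : ContinuousAt (fun s => φ ((((k:ℝ)+1)/N) • c s) - φ (((k:ℝ)/N) • c s)) t :=
    ((hφc.comp (hc.const_smul ((((k:ℝ)+1)/N)))).sub
      (hφc.comp (hc.const_smul (((k:ℝ)/N))))).continuousAt
  show ContinuousAt (repV ∘ fun s => φ ((((k:ℝ)+1)/N) • c s) - φ (((k:ℝ)/N) • c s)) t
  exact ContinuousAt.comp (continuousAt_repV _ hz) hcont

lemma chain_indep (hφc : Continuous φ) (hφl : ∀ u v : Fin d → ℝ, ‖φ u - φ v‖ ≤ ‖u - v‖)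
    {N N' : ℕ} (hN : N ≠ 0) (hN' : N' ≠ 0) (x : Fin d → ℝ)
    (hx : ‖x‖ ≤ (N:ℝ)/4) (hx' : ‖x‖ ≤ (N':ℝ)/4) :
    chain φ x N = chain φ x N' := by
  have key := intvec (fun t => chain φ (t • x) N - chain φ (t • x) N') ?_ ?_ ?_
  · have h1 := congrFun key
    rw [one_smul] at key
    exact sub_eq_zero.mp key
  · apply ContinuousOn.sub <;>
    · apply chain_cont φ hφc hφl (by assumption) _ (continuous_id.smul continuous_const)
      intro t ht
      show ‖t • x‖ ≤ _
      rw [norm_smul]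
      calc ‖t‖ * ‖x‖ ≤ 1 * ‖x‖ := by
            apply mul_le_mul_of_nonneg_right _ (norm_nonneg x)
            rw [Real.norm_eq_abs, abs_le]
            exact ⟨by linarith [ht.1], ht.2⟩
        _ = ‖x‖ := one_mul _
        _ ≤ _ := by assumption
  · intro t _
    rw [quotMap_sub, quot_chain φ _ _ hN, quot_chain φ _ _ hN', sub_self]
  · simp only [zero_smul]
    have hz : ∀ (M : ℕ), chain φ (0 : Fin d → ℝ) M = 0 := by
      intro M
      unfold chain
      apply Finset.sum_eq_zero
      intro k _
      rw [smul_zero, smul_zero, sub_self]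
      exact repV_zero
    rw [hz, hz, sub_self]

lemma chain_zero (M : ℕ) : chain φ (0 : Fin d → ℝ) M = 0 := by
  unfold chain
  apply Finset.sum_eq_zero
  intro k _
  rw [smul_zero, smul_zero, sub_self]
  exact repV_zero

/-- number of subdivision steps used to define the lift at `x` -/
def nsteps (x : Fin d → ℝ) : ℕ := ⌈4 * ‖x‖⌉₊ + 1

lemma nsteps_ne (x : Fin d → ℝ) : nsteps x ≠ 0 := Nat.succ_ne_zero _

lemma nsteps_adm (x : Fin d → ℝ) : ‖x‖ ≤ (nsteps x : ℝ)/4 := by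
  have h := Nat.le_ceil (4 * ‖x‖)
  have : (⌈4 * ‖x‖⌉₊ : ℝ) ≤ ((nsteps x : ℕ) : ℝ) := by
    unfold nsteps; push_cast; linarith
  rw [le_div_iff₀ (by norm_num : (0:ℝ) < 4)]
  linarith

/-- the lift of `φ` through `quotMap`, normalized to `repV (φ 0)` at `0` -/
noncomputable def lift0 (x : Fin d → ℝ) : Fin d → ℝ :=
  repV (φ 0) + chain φ x (nsteps x)

lemma quot_lift0 (x : Fin d → ℝ) : quotMap d (lift0 φ x) = φ x := by
  rw [lift0, quotMap_add, quotMap_repV, quot_chain φ x _ (nsteps_ne x)]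
  abel

lemma lift0_eq_chain (hφc : Continuous φ) (hφl : ∀ u v : Fin d → ℝ, ‖φ u - φ v‖ ≤ ‖u - v‖)
    {N : ℕ} (hN : N ≠ 0) {x : Fin d → ℝ} (hx : ‖x‖ ≤ (N:ℝ)/4) :
    lift0 φ x = repV (φ 0) + chain φ x N := by
  rw [lift0, chain_indep φ hφc hφl (nsteps_ne x) hN x (nsteps_adm x) hx]

lemma lift0_zero : lift0 φ (0 : Fin d → ℝ) = repV (φ 0) := by
  rw [lift0, chain_zero, add_zero]

lemma lift0_add (hφc : Continuous φ) (hφl : ∀ u v : Fin d → ℝ, ‖φ u - φ v‖ ≤ ‖u - v‖)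
    (x h : Fin d → ℝ) (hh : ‖h‖ ≤ 1/8) :
    lift0 φ (x + h) = lift0 φ x + repV (φ (x + h) - φ x) := by
  set N : ℕ := ⌈4 * (‖x‖ + ‖h‖)⌉₊ + 1 with hNdef
  have hNne : N ≠ 0 := Nat.succ_ne_zero _
  have hNadm : ‖x‖ + ‖h‖ ≤ (N:ℝ)/4 := by
    have hceil := Nat.le_ceil (4 * (‖x‖ + ‖h‖))
    have : (⌈4 * (‖x‖ + ‖h‖)⌉₊ : ℝ) ≤ ((N : ℕ) : ℝ) := by rw [hNdef]; push_cast; linarith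
    rw [le_div_iff₀ (by norm_num : (0:ℝ) < 4)]
    linarith
  have hbound : ∀ t ∈ Set.Icc (0:ℝ) 1, ‖x + t • h‖ ≤ (N:ℝ)/4 := by
    intro t ht
    calc ‖x + t • h‖ ≤ ‖x‖ + ‖t • h‖ := norm_add_le _ _
      _ ≤ ‖x‖ + ‖h‖ := by
          rw [norm_smul]
          have : ‖t‖ ≤ 1 := by rw [Real.norm_eq_abs, abs_le]; exact ⟨by linarith [ht.1], ht.2⟩
          nlinarith [norm_nonneg h]
      _ ≤ (N:ℝ)/4 := hNadm
  have key := intvec (fun t => lift0 φ x + repV (φ (x + t • h) - φ x)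
      - (repV (φ 0) + chain φ (x + t • h) N)) ?_ ?_ ?_
  · have := sub_eq_zero.mp key
    rw [one_smul] at this
    rw [this, ← lift0_eq_chain φ hφc hφl hNne (by simpa using hbound 1 (by norm_num))]
  · apply ContinuousOn.sub
    · apply ContinuousOn.add continuousOn_const
      intro t ht
      apply ContinuousAt.continuousWithinAt
      have hz : ‖φ (x + t • h) - φ x‖ < 1/2 := by
        have e : (x + t • h) - x = t • h := add_sub_cancel_left x _
        have h1 : ‖φ (x + t • h) - φ x‖ ≤ ‖t • h‖ := by
          have := hφl (x + t • h) x
          rwa [e] at this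
        have h2 : ‖t • h‖ ≤ ‖h‖ := by
          rw [norm_smul]
          have : ‖t‖ ≤ 1 := by rw [Real.norm_eq_abs, abs_le]; exact ⟨by linarith [ht.1], ht.2⟩
          nlinarith [norm_nonneg h]
        linarith
      have hcont : ContinuousAt (fun s : ℝ => φ (x + s • h) - φ x) t :=
        ((hφc.comp (continuous_const.add (continuous_id.smul continuous_const))).sub
          continuous_const).continuousAt
      show ContinuousAt (repV ∘ fun s : ℝ => φ (x + s • h) - φ x) t
      exact ContinuousAt.comp (continuousAt_repV _ hz) hcont
    · exact continuousOn_const.add (chain_cont φ hφc hφl hNne _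
        (continuous_const.add (continuous_id.smul continuous_const)) hbound)
  · intro t ht
    rw [quotMap_sub, quotMap_add, quotMap_add, quotMap_repV, quotMap_repV, quot_lift0,
      quot_chain φ _ _ hNne]
    abel
  · simp only [zero_smul, add_zero, sub_self]
    rw [repV_zero, add_zero, lift0_eq_chain φ hφc hφl hNne (by
      have := hbound 0 (by norm_num)
      simpa using this)]
    exact sub_self _

lemma lift0_step_norm (hφc : Continuous φ) (hφl : ∀ u v : Fin d → ℝ, ‖φ u - φ v‖ ≤ ‖u - v‖)
    (hφe : ∀ u v : Fin d → ℝ, ‖u - v‖ ≤ 1/2 → ‖φ u - φ v‖ = ‖u - v‖)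
    (x h : Fin d → ℝ) (hh : ‖h‖ ≤ 1/8) : ‖lift0 φ (x + h) - lift0 φ x‖ = ‖h‖ := by
  rw [lift0_add φ hφc hφl x h hh, add_sub_cancel_left, norm_repV]
  have := hφe (x + h) x (by rw [add_sub_cancel_left]; linarith)
  rw [this, add_sub_cancel_left]

lemma lift0_lipschitz (hφc : Continuous φ) (hφl : ∀ u v : Fin d → ℝ, ‖φ u - φ v‖ ≤ ‖u - v‖)
    (hφe : ∀ u v : Fin d → ℝ, ‖u - v‖ ≤ 1/2 → ‖φ u - φ v‖ = ‖u - v‖)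
    (x y : Fin d → ℝ) : ‖lift0 φ x - lift0 φ y‖ ≤ ‖x - y‖ := by
  set Δ : Fin d → ℝ := x - y with hΔ
  set n : ℕ := ⌈8 * ‖Δ‖⌉₊ + 1 with hn
  have hnpos : (0:ℝ) < n := by positivity
  have hstep : ‖Δ‖ / n ≤ 1/8 := by
    rw [div_le_iff₀ hnpos]
    have hceil := Nat.le_ceil (8 * ‖Δ‖)
    have : (⌈8 * ‖Δ‖⌉₊ : ℝ) + 1 = ((n:ℕ):ℝ) := by rw [hn]; push_cast; ring
    nlinarith
  set f : ℕ → (Fin d → ℝ) := fun k => lift0 φ (y + ((k:ℝ)/n) • Δ) with hf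
  have f0 : f 0 = lift0 φ y := by simp [hf]
  have fn : f n = lift0 φ x := by
    have h1 : ((n:ℝ)/n) = 1 := div_self (ne_of_gt hnpos)
    show lift0 φ (y + ((n:ℝ)/n) • Δ) = lift0 φ x
    have e : y + (x - y) = x := by abel
    rw [h1, one_smul, hΔ, e]
  have hd : ∀ k, dist (f k) (f (k+1)) = ‖Δ‖/n := by
    intro k
    have harg : y + (((k+1:ℕ):ℝ)/n) • Δ = (y + ((k:ℝ)/n) • Δ) + ((1:ℝ)/n) • Δ := by
      push_cast
      rw [add_assoc, ← add_smul]
      congr 2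
      field_simp
    have hsmall : ‖((1:ℝ)/n) • Δ‖ ≤ 1/8 := by
      rw [norm_smul, Real.norm_eq_abs, abs_of_pos (by positivity), one_div,
        inv_mul_eq_div, div_le_iff₀ hnpos]
      rw [div_le_iff₀ hnpos] at hstep
      linarith
    have hkey := lift0_step_norm φ hφc hφl hφe (y + ((k:ℝ)/n) • Δ) (((1:ℝ)/n) • Δ) hsmall
    rw [dist_eq_norm']
    show ‖lift0 φ (y + (((k+1:ℕ):ℝ)/n) • Δ) - lift0 φ (y + ((k:ℝ)/n) • Δ)‖ = ‖Δ‖/n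
    rw [harg, hkey, norm_smul, Real.norm_eq_abs, abs_of_pos (by positivity)]
    ring
  calc ‖lift0 φ x - lift0 φ y‖ = dist (f 0) (f n) := by rw [f0, fn, dist_eq_norm']
    _ ≤ ∑ k ∈ Finset.range n, dist (f k) (f (k+1)) := dist_le_range_sum_dist f n
    _ = ∑ _k ∈ Finset.range n, ‖Δ‖/(n:ℝ) := Finset.sum_congr rfl (fun k _ => hd k)
    _ = n * (‖Δ‖/n) := by rw [Finset.sum_const, Finset.card_range, nsmul_eq_mul]
    _ = ‖Δ‖ := by field_simp
    _ = ‖x - y‖ := by rw [hΔ]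

lemma quotMap_zero : quotMap d (0 : Fin d → ℝ) = 0 := by
  funext i
  show (((0:Fin d → ℝ) i : ℝ) : AddCircle (1:ℝ)) = 0
  norm_num

lemma deck (F : (Fin d → ℝ) → (Fin d → ℝ)) (hF : Continuous F)
    (hq : ∀ x, quotMap d (F x) = quotMap d x) : ∀ x, F x = x + F 0 := by
  intro x
  have key := intvec (fun t => F (t • x) - t • x - F 0) ?_ ?_ ?_
  · have h2 : F x - x - F 0 = 0 := by simpa using key
    rw [sub_sub, sub_eq_zero] at h2
    exact h2
  · exact (((hF.comp (continuous_id.smul continuous_const)).sub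
      (continuous_id.smul continuous_const)).sub continuous_const).continuousOn
  · intro t _
    show quotMap d (F (t • x) - t • x - F 0) = 0
    rw [quotMap_sub, quotMap_sub, hq, hq, quotMap_zero, sub_zero, sub_self]
  · show F ((0:ℝ) • x) - (0:ℝ) • x - F 0 = 0
    rw [zero_smul, sub_zero, sub_self]

end Chain

----------------- Section D: signed permutation classification -----------------

lemma signed_perm_classify {d : ℕ} (v : Fin d → Fin d → ℝ)
    (hint : ∀ j i, ∃ k : ℤ, v j i = k)
    (hnorm : ∀ j, ‖v j‖ = 1)
    (hsub : ∀ j k, j ≠ k → ‖v j - v k‖ ≤ 1)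
    (hadd : ∀ j k, j ≠ k → ‖v j + v k‖ ≤ 1) :
    ∃ M : Matrix (Fin d) (Fin d) ℤ, IsSignedPermMatrix M ∧ ∀ i j, (M i j : ℝ) = v j i := by
  classical
  set M : Matrix (Fin d) (Fin d) ℤ := fun i j => round (v j i) with hM
  have hMv : ∀ i j, (M i j : ℝ) = v j i := by
    intro i j
    obtain ⟨k, hk⟩ := hint j i
    rw [hM]
    simp only
    rw [hk, round_intCast]
  have habs : ∀ i j, |v j i| ≤ 1 := by
    intro i j
    calc |v j i| = ‖v j i‖ := (Real.norm_eq_abs _).symm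
      _ ≤ ‖v j‖ := norm_le_pi_norm (v j) i
      _ = 1 := hnorm j
  have hentry : ∀ i j, M i j = 0 ∨ M i j = 1 ∨ M i j = -1 := by
    intro i j
    have h1 : |(M i j : ℝ)| ≤ 1 := by rw [hMv]; exact habs i j
    have : |M i j| ≤ 1 := by exact_mod_cast h1
    have := abs_le.mp this
    omega
  -- supports
  set S : Fin d → Finset (Fin d) := fun j => Finset.univ.filter (fun i => M i j ≠ 0) with hS
  have hdisj : ∀ j k, j ≠ k → Disjoint (S j) (S k) := by
    intro j k hjk
    rw [Finset.disjoint_left]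
    intro i hij hik
    rw [hS, Finset.mem_filter] at hij hik
    have haj : (M i j = 1 ∨ M i j = -1) := (hentry i j).resolve_left hij.2
    have hak : (M i k = 1 ∨ M i k = -1) := (hentry i k).resolve_left hik.2
    have hcsub : |v j i - v k i| ≤ 1 := by
      calc |v j i - v k i| = ‖(v j - v k) i‖ := by rw [Real.norm_eq_abs]; rfl
        _ ≤ ‖v j - v k‖ := norm_le_pi_norm _ i
        _ ≤ 1 := hsub j k hjk
    have hcadd : |v j i + v k i| ≤ 1 := by
      calc |v j i + v k i| = ‖(v j + v k) i‖ := by rw [Real.norm_eq_abs]; rfl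
        _ ≤ ‖v j + v k‖ := norm_le_pi_norm _ i
        _ ≤ 1 := hadd j k hjk
    rw [← hMv i j, ← hMv i k] at hcsub hcadd
    rcases haj with h1 | h1 <;> rcases hak with h2 | h2 <;>
      rw [h1, h2] at hcsub hcadd <;> have hc := And.intro hcsub hcadd <;> norm_num at hc
  have hne : ∀ j, (S j).Nonempty := by
    intro j
    by_contra hemp
    rw [Finset.not_nonempty_iff_eq_empty] at hemp
    have : v j = 0 := by
      funext i
      have : i ∉ S j := by rw [hemp]; exact Finset.notMem_empty i
      rw [hS, Finset.mem_filter] at this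
      push_neg at this
      have hM0 : M i j = 0 := this (Finset.mem_univ i)
      have := hMv i j
      rw [hM0] at this
      simpa using this.symm
    have hn := hnorm j
    rw [this] at hn
    simp at hn
  have hcard : ∀ j, (S j).card = 1 := by
    by_contra hc
    push_neg at hc
    obtain ⟨j₀, hj₀⟩ := hc
    have h2 : 2 ≤ (S j₀).card := by
      have h1 := Finset.card_pos.mpr (hne j₀)
      omega
    have hsum : ∑ j, (S j).card = (Finset.univ.biUnion S).card := by
      rw [Finset.card_biUnion]
      intro j _ k _ hjk
      exact hdisj j k hjk
    have hle : (Finset.univ.biUnion S).card ≤ d := by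
      calc (Finset.univ.biUnion S).card ≤ (Finset.univ : Finset (Fin d)).card :=
        Finset.card_le_univ _
        _ = d := Finset.card_univ.trans (Fintype.card_fin d)
    have hlt : (d : ℕ) < ∑ j, (S j).card := by
      calc d = ∑ _j : Fin d, 1 := by simp
        _ < ∑ j, (S j).card := by
            apply Finset.sum_lt_sum
            · intro j _; exact Nat.one_le_iff_ne_zero.mpr
                (fun h => (Finset.nonempty_iff_ne_empty.mp (hne j)) (Finset.card_eq_zero.mp h))
            · exact ⟨j₀, Finset.mem_univ j₀, by omega⟩
    omega
  choose σ hσ using fun j => Finset.card_eq_one.mp (hcard j)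
  have hmemσ : ∀ j i, M i j ≠ 0 ↔ i = σ j := by
    intro j i
    constructor
    · intro h
      have : i ∈ S j := by rw [hS, Finset.mem_filter]; exact ⟨Finset.mem_univ i, h⟩
      rw [hσ j, Finset.mem_singleton] at this
      exact this
    · intro h
      have : σ j ∈ S j := by rw [hσ j]; exact Finset.mem_singleton_self _
      rw [hS, Finset.mem_filter] at this
      rw [h]; exact this.2
  have hσinj : Function.Injective σ := by
    intro j k hjk
    by_contra hne'
    have := hdisj j k hne'
    rw [Finset.disjoint_left, hσ j, hσ k] at this
    exact this (Finset.mem_singleton_self (σ j)) (hjk ▸ Finset.mem_singleton_self (σ j))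
  have hσbij : Function.Bijective σ := (Finite.injective_iff_bijective).mp hσinj
  refine ⟨M, ⟨?_, ?_, hentry⟩, hMv⟩
  · intro i
    obtain ⟨j, hj⟩ := hσbij.2 i
    refine ⟨j, (hmemσ j i).mpr hj.symm, ?_⟩
    intro j' hj'
    have := (hmemσ j' i).mp hj'
    exact hσinj (by rw [← this, ← hj])
  · intro j
    exact ⟨σ j, (hmemσ j (σ j)).mpr rfl, fun i hi => (hmemσ j i).mp hi⟩

----------------- Final assembly -----------------

/-- Every bijective isometry of the torus (with the sup quotient metric) is affine,
induced by `x ↦ M x + b` for a signed permutation matrix `M` and a vector `b ∈ ℝ^d`. -/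
theorem bijective_isometry_of_torus_is_signed_perm_affine
    (d : ℕ) (hd : 1 ≤ d)
    (g : Torus d → Torus d) (hbij : Function.Bijective g) (hiso : Isometry g) :
    ∃ M : Matrix (Fin d) (Fin d) ℤ, IsSignedPermMatrix M ∧
      ∃ b : Fin d → ℝ, ∀ x : Fin d → ℝ,
        g (quotMap d x) = quotMap d (fun i => (∑ j, (M i j : ℝ) * x j) + b i) := by
  classical
  set φ : (Fin d → ℝ) → Torus d := fun x => g (quotMap d x) with hφ
  have hφc : Continuous φ := hiso.continuous.comp quotMap_continuous
  have hφl : ∀ u v : Fin d → ℝ, ‖φ u - φ v‖ ≤ ‖u - v‖ := by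
    intro u v
    rw [← dist_eq_norm, hφ]
    simp only
    rw [hiso.dist_eq, dist_eq_norm, ← quotMap_sub]
    exact norm_quotMap_le _
  have hφe : ∀ u v : Fin d → ℝ, ‖u - v‖ ≤ 1/2 → ‖φ u - φ v‖ = ‖u - v‖ := by
    intro u v huv
    rw [← dist_eq_norm, hφ]
    simp only
    rw [hiso.dist_eq, dist_eq_norm, ← quotMap_sub]
    exact norm_quotMap_eq _ huv
  set geq := Equiv.ofBijective g hbij with hgeq
  have hgiso : Isometry (fun z : Torus d => geq.symm z) := by
    apply Isometry.of_dist_eq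
    intro u v
    calc dist (geq.symm u) (geq.symm v) = dist (g (geq.symm u)) (g (geq.symm v)) :=
        (hiso.dist_eq _ _).symm
      _ = dist u v := by
          rw [show g (geq.symm u) = u from geq.apply_symm_apply u,
            show g (geq.symm v) = v from geq.apply_symm_apply v]
  set ψ : (Fin d → ℝ) → Torus d := fun x => geq.symm (quotMap d x) with hψ
  have hψc : Continuous ψ := hgiso.continuous.comp quotMap_continuous
  have hψl : ∀ u v : Fin d → ℝ, ‖ψ u - ψ v‖ ≤ ‖u - v‖ := by
    intro u v
    rw [← dist_eq_norm, hψ]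
    simp only
    rw [hgiso.dist_eq, dist_eq_norm, ← quotMap_sub]
    exact norm_quotMap_le _
  have hψe : ∀ u v : Fin d → ℝ, ‖u - v‖ ≤ 1/2 → ‖ψ u - ψ v‖ = ‖u - v‖ := by
    intro u v huv
    rw [← dist_eq_norm, hψ]
    simp only
    rw [hgiso.dist_eq, dist_eq_norm, ← quotMap_sub]
    exact norm_quotMap_eq _ huv
  set G : (Fin d → ℝ) → (Fin d → ℝ) := lift0 φ with hG
  set G' : (Fin d → ℝ) → (Fin d → ℝ) := lift0 ψ with hG'
  have hGq : ∀ x, quotMap d (G x) = φ x := quot_lift0 φ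
  have hG'q : ∀ x, quotMap d (G' x) = ψ x := quot_lift0 ψ
  have hGlipn : ∀ x y, ‖G x - G y‖ ≤ ‖x - y‖ := lift0_lipschitz φ hφc hφl hφe
  have hG'lipn : ∀ x y, ‖G' x - G' y‖ ≤ ‖x - y‖ := lift0_lipschitz ψ hψc hψl hψe
  have hGlip : LipschitzWith 1 G := LipschitzWith.of_dist_le_mul (by
    intro x y; rw [dist_eq_norm, dist_eq_norm]; simpa using hGlipn x y)
  have hG'lip : LipschitzWith 1 G' := LipschitzWith.of_dist_le_mul (by
    intro x y; rw [dist_eq_norm, dist_eq_norm]; simpa using hG'lipn x y)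
  -- G' ∘ G is a deck transformation
  have hK : ∀ x, G' (G x) = x + G' (G 0) := by
    apply deck
    · exact hG'lip.continuous.comp hGlip.continuous
    · intro x
      rw [hG'q, hψ]
      simp only
      rw [hGq, hφ]
      simp only
      exact geq.symm_apply_apply (quotMap d x)
  have hK' : ∀ z, G (G' z) = z + G (G' 0) := by
    apply deck
    · exact hGlip.continuous.comp hG'lip.continuous
    · intro z
      rw [hGq, hφ]
      simp only
      rw [hG'q, hψ]
      simp only
      exact geq.apply_symm_apply (quotMap d z)
  have hlow : ∀ x y, ‖x - y‖ ≤ ‖G x - G y‖ := by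
    intro x y
    have : x - y = G' (G x) - G' (G y) := by rw [hK x, hK y]; abel
    rw [this]
    exact hG'lipn (G x) (G y)
  have hGinj : Function.Injective G := by
    intro x y hxy
    have := hlow x y
    rw [hxy, sub_self, norm_zero] at this
    have : ‖x - y‖ = 0 := le_antisymm this (norm_nonneg _)
    rwa [norm_sub_eq_zero_iff] at this
  have hGsurj : Function.Surjective G := by
    intro w
    exact ⟨G' (w - G (G' 0)), by rw [hK' (w - G (G' 0))]; abel⟩
  set Geq : (Fin d → ℝ) ≃ (Fin d → ℝ) := Equiv.ofBijective G ⟨hGinj, hGsurj⟩ with hGeq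
  have hGiso : Isometry (fun x => Geq x) := by
    apply Isometry.of_dist_eq
    intro x y
    rw [dist_eq_norm, dist_eq_norm]
    exact le_antisymm (hGlipn x y) (hlow x y)
  set E : (Fin d → ℝ) ≃ᵢ (Fin d → ℝ) := ⟨Geq, hGiso⟩ with hE
  set L := E.toRealLinearIsometryEquiv with hL
  have hLx : ∀ x, L x = G x - G 0 := fun x => E.toRealLinearIsometryEquiv_apply x
  have hGx : ∀ x, G x = L x + G 0 := by intro x; rw [hLx]; abel
  -- canonical basis
  set e : Fin d → (Fin d → ℝ) := fun j => fun i => if j = i then (1:ℝ) else 0 with he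
  have hnorm01 : ∀ w : Fin d → ℝ, (∀ i, |w i| ≤ 1) → (∃ i, |w i| = 1) → ‖w‖ = 1 := by
    rintro w hb ⟨i0, hi0⟩
    apply le_antisymm
    · rw [pi_norm_le_iff_of_nonneg zero_le_one]
      intro i; rw [Real.norm_eq_abs]; exact hb i
    · calc (1:ℝ) = |w i0| := hi0.symm
        _ = ‖w i0‖ := (Real.norm_eq_abs _).symm
        _ ≤ ‖w‖ := norm_le_pi_norm w i0
  have he_norm : ∀ j, ‖e j‖ = 1 := by
    intro j
    apply hnorm01
    · intro i; rw [he]; simp only; split_ifs <;> norm_num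
    · exact ⟨j, by rw [he]; simp⟩
  have he_sub : ∀ j k, j ≠ k → ‖e j - e k‖ = 1 := by
    intro j k hjk
    apply hnorm01
    · intro i
      show |e j i - e k i| ≤ 1
      rw [he]; simp only; split_ifs with h1 h2 h2 <;> norm_num
    · refine ⟨j, ?_⟩
      show |e j j - e k j| = 1
      have hkj : ¬ (k = j) := fun h => hjk h.symm
      simp [he, hkj]
  have he_add : ∀ j k, j ≠ k → ‖e j + e k‖ = 1 := by
    intro j k hjk
    apply hnorm01
    · intro i
      show |e j i + e k i| ≤ 1
      rw [he]; simp only; split_ifs with h1 h2 h2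
      · exact absurd (h1.trans h2.symm) hjk
      · norm_num
      · norm_num
      · norm_num
    · refine ⟨j, ?_⟩
      show |e j j + e k j| = 1
      have hkj : ¬ (k = j) := fun h => hjk h.symm
      simp [he, hkj]
  -- integrality of the columns
  have hq0 : ∀ j, quotMap d (L (e j)) = 0 := by
    intro j
    have h1 : quotMap d (e j) = quotMap d 0 := by
      funext i
      show ((e j i : ℝ) : AddCircle (1:ℝ)) = (((0:Fin d → ℝ) i : ℝ) : AddCircle (1:ℝ))
      rw [he]
      simp only
      split_ifs with h
      · show ((1:ℝ) : AddCircle (1:ℝ)) = _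
        rw [AddCircle.coe_period]
        norm_num
      · norm_num
    have h2 : quotMap d (G (e j)) = quotMap d (G 0) := by
      rw [hGq, hGq, hφ]
      simp only
      rw [h1]
    rw [hLx, quotMap_sub, h2, sub_self]
  have hint : ∀ j i, ∃ k : ℤ, (L (e j)) i = k := by
    intro j i
    have h := congrFun (hq0 j) i
    exact (coe_eq_zero_iff_int _).mp h
  obtain ⟨M, hsp, hMv⟩ := signed_perm_classify (fun j => L (e j)) hint
    (fun j => by rw [L.norm_map, he_norm])
    (fun j k hjk => by
      rw [show L (e j) - L (e k) = L (e j - e k) from (L.map_sub _ _).symm, L.norm_map]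
      exact le_of_eq (he_sub j k hjk))
    (fun j k hjk => by
      rw [show L (e j) + L (e k) = L (e j + e k) from (L.map_add _ _).symm, L.norm_map]
      exact le_of_eq (he_add j k hjk))
  refine ⟨M, hsp, G 0, ?_⟩
  intro x
  have h1 : quotMap d (G x) = g (quotMap d x) := by rw [hGq, hφ]
  have hvec : G x = (fun i => (∑ j, (M i j : ℝ) * x j) + G 0 i) := by
    rw [hGx x]
    funext i
    show L x i + G 0 i = (∑ j, (M i j : ℝ) * x j) + G 0 i
    congr 1
    have hxe : L x = ∑ j, x j • L (e j) := by
      have hx : x = ∑ j, x j • e j := by rw [he]; exact pi_eq_sum_univ x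
      conv_lhs => rw [hx]
      rw [map_sum]
      exact Finset.sum_congr rfl (fun j _ => L.map_smul (x j) (e j))
    rw [hxe, Finset.sum_apply]
    apply Finset.sum_congr rfl
    intro j _
    rw [Pi.smul_apply, smul_eq_mul, ← hMv i j, mul_comm]
  rw [← h1, hvec]

end
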